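/- Let H = (V, E) be a finite collection of hyperedges with nonnegative submodular splitting functions g_f : 2^f → ℝ≥0, g_f(∅)=0. Fix e ∈ E and define ρ_e := ∑_{(u,v) ∈ V×V} g_e^{u→v} / (∑_{f ∈ E} g_f^{u→v}) with the zero-denominator convention. Then for every nonempty proper subset S ⊂ V with cut_H(S) > 0, g_e(S ∩ e) / cut_H(S) ≤ ρ_e. -/
import Mathlib


/-- The minimum directed cut of a splitting function `g` on hyperedge `e`
between `u` and `v`. -/
noncomputable def dirCut {V : Type*} [Fintype V] [DecidableEq V]
    (g : Finset V → ℝ) (e : Finset V) (u v : V) : ℝ :=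
  sInf {x : ℝ | ∃ S : Finset V, u ∈ S ∧ v ∉ S ∧ x = g (S ∩ e)}

/-- Over-estimated importance of hyperedge `e`; in Lean, `x / 0 = 0`, which matches
the convention that a fraction with zero denominator is zero. -/
noncomputable def rho {V ι : Type*} [Fintype V] [DecidableEq V]
    (E : Finset ι) (edge : ι → Finset V) (g : ι → Finset V → ℝ) (e : ι) : ℝ :=
  ∑ u : V, ∑ v : V,
    dirCut (g e) (edge e) u v / ∑ f ∈ E, dirCut (g f) (edge f) u v

/-- The cut value of `S` in the submodular hypergraph. -/
def cutH {V ι : Type*} [DecidableEq V]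
    (E : Finset ι) (edge : ι → Finset V) (g : ι → Finset V → ℝ)
    (S : Finset V) : ℝ :=
  ∑ f ∈ E, g f (S ∩ edge f)

section helpers
variable {V : Type*} [Fintype V] [DecidableEq V]

lemma dirCut_nonneg (g' : Finset V → ℝ) (e' : Finset V)
    (hnn : ∀ B ⊆ e', 0 ≤ g' B) (u v : V) : 0 ≤ dirCut g' e' u v := by
  apply Real.sInf_nonneg
  rintro x ⟨T, -, -, rfl⟩
  exact hnn _ Finset.inter_subset_right

lemma dirCut_le_witness (g' : Finset V → ℝ) (e' : Finset V)
    (hnn : ∀ B ⊆ e', 0 ≤ g' B) {u v : V} {T : Finset V}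
    (hu : u ∈ T) (hv : v ∉ T) : dirCut g' e' u v ≤ g' (T ∩ e') := by
  refine csInf_le ⟨0, ?_⟩ ⟨T, hu, hv, rfl⟩
  rintro x ⟨T', -, -, rfl⟩
  exact hnn _ Finset.inter_subset_right

lemma dirCut_attained (g' : Finset V → ℝ) (e' : Finset V) {u v : V} (huv : u ≠ v) :
    ∃ T : Finset V, u ∈ T ∧ v ∉ T ∧ dirCut g' e' u v = g' (T ∩ e') := by
  have hfin : {x : ℝ | ∃ S : Finset V, u ∈ S ∧ v ∉ S ∧ x = g' (S ∩ e')}.Finite := by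
    apply Set.Finite.subset (Set.finite_range fun T : Finset V => g' (T ∩ e'))
    rintro x ⟨T, -, -, rfl⟩
    exact ⟨T, rfl⟩
  have hne : ({x : ℝ | ∃ S : Finset V, u ∈ S ∧ v ∉ S ∧ x = g' (S ∩ e')}).Nonempty :=
    ⟨g' ({u} ∩ e'), {u}, Finset.mem_singleton_self u, by simp [huv.symm], rfl⟩
  obtain ⟨T, h1, h2, h3⟩ := hne.csInf_mem hfin
  exact ⟨T, h1, h2, h3⟩

end helpers

section subadd
variable {V : Type*} [DecidableEq V]

lemma union_subadd (g' : Finset V → ℝ) (e' : Finset V)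
    (hnn : ∀ B ⊆ e', 0 ≤ g' B)
    (hsub : ∀ A ⊆ e', ∀ B ⊆ e', g' (A ∪ B) + g' (A ∩ B) ≤ g' A + g' B)
    {A B : Finset V} (hA : A ⊆ e') (hB : B ⊆ e') :
    g' (A ∪ B) ≤ g' A + g' B := by
  have h1 := hsub A hA B hB
  have h2 := hnn (A ∩ B) (Finset.inter_subset_left.trans hA)
  linarith

lemma inter_subadd (g' : Finset V → ℝ) (e' : Finset V)
    (hnn : ∀ B ⊆ e', 0 ≤ g' B)
    (hsub : ∀ A ⊆ e', ∀ B ⊆ e', g' (A ∪ B) + g' (A ∩ B) ≤ g' A + g' B)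
    {A B : Finset V} (hA : A ⊆ e') (hB : B ⊆ e') :
    g' (A ∩ B) ≤ g' A + g' B := by
  have h1 := hsub A hA B hB
  have h2 := hnn (A ∪ B) (Finset.union_subset hA hB)
  linarith

lemma sup'_subadd (g' : Finset V → ℝ) (e' : Finset V)
    (hnn : ∀ B ⊆ e', 0 ≤ g' B)
    (hsub : ∀ A ⊆ e', ∀ B ⊆ e', g' (A ∪ B) + g' (A ∩ B) ≤ g' A + g' B)
    {ι' : Type*} (I : Finset ι') (hI : I.Nonempty) (F : ι' → Finset V)
    (hF : ∀ i ∈ I, F i ⊆ e') :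
    g' (I.sup' hI F) ≤ ∑ i ∈ I, g' (F i) := by
  induction I using Finset.cons_induction with
  | empty => exact absurd hI (by simp)
  | cons a s ha ih =>
    rcases s.eq_empty_or_nonempty with rfl | hs
    · simp
    · rw [Finset.sup'_cons hs, Finset.sum_cons]
      have hsup : s.sup' hs F ⊆ e' :=
        Finset.sup'_le hs F fun i hi => hF i (Finset.mem_cons_of_mem hi)
      calc g' (F a ⊔ s.sup' hs F) ≤ g' (F a) + g' (s.sup' hs F) :=
            union_subadd g' e' hnn hsub (hF a (Finset.mem_cons_self a s)) hsup
        _ ≤ g' (F a) + ∑ i ∈ s, g' (F i) := by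
            have := ih hs (fun i hi => hF i (Finset.mem_cons_of_mem hi))
            linarith

lemma inf'_subadd (g' : Finset V → ℝ) (e' : Finset V)
    (hnn : ∀ B ⊆ e', 0 ≤ g' B)
    (hsub : ∀ A ⊆ e', ∀ B ⊆ e', g' (A ∪ B) + g' (A ∩ B) ≤ g' A + g' B)
    {ι' : Type*} (I : Finset ι') (hI : I.Nonempty) (F : ι' → Finset V)
    (hF : ∀ i ∈ I, F i ⊆ e') :
    g' (I.inf' hI F) ≤ ∑ i ∈ I, g' (F i) := by
  induction I using Finset.cons_induction with
  | empty => exact absurd hI (by simp)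
  | cons a s ha ih =>
    rcases s.eq_empty_or_nonempty with rfl | hs
    · simp
    · rw [Finset.inf'_cons hs, Finset.sum_cons]
      have hinf : s.inf' hs F ⊆ e' := by
        obtain ⟨i, hi⟩ := hs
        exact (Finset.inf'_le F hi).trans (hF i (Finset.mem_cons_of_mem hi))
      calc g' (F a ⊓ s.inf' hs F) ≤ g' (F a) + g' (s.inf' hs F) :=
            inter_subadd g' e' hnn hsub (hF a (Finset.mem_cons_self a s)) hinf
        _ ≤ g' (F a) + ∑ i ∈ s, g' (F i) := by
            have := ih hs (fun i hi => hF i (Finset.mem_cons_of_mem hi))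
            linarith

end subadd

section key
variable {V : Type*} [Fintype V] [DecidableEq V]

lemma key_ineq (g' : Finset V → ℝ) (e' : Finset V) (h0 : g' ∅ = 0)
    (hnn : ∀ B ⊆ e', 0 ≤ g' B)
    (hsub : ∀ A ⊆ e', ∀ B ⊆ e', g' (A ∪ B) + g' (A ∩ B) ≤ g' A + g' B)
    (S : Finset V) (hS2 : S ≠ Finset.univ) :
    g' (S ∩ e') ≤ ∑ u ∈ S, ∑ v ∈ Sᶜ, dirCut g' e' u v := by
  obtain ⟨v0, hv0⟩ : ∃ v0, v0 ∉ S := by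
    by_contra h
    push_neg at h
    exact hS2 (Finset.eq_univ_iff_forall.2 h)
  set A := S ∩ e' with hA
  rcases A.eq_empty_or_nonempty with hAe | hAne
  · rw [hAe, h0]
    exact Finset.sum_nonneg fun u _ => Finset.sum_nonneg fun v _ =>
      dirCut_nonneg g' e' hnn u v
  · set W := (e' \ S) ∪ {v0} with hW
    have hWne : W.Nonempty := ⟨v0, by simp [hW]⟩
    have hWS : ∀ v ∈ W, v ∉ S := by
      intro v hv
      rw [hW, Finset.mem_union] at hv
      rcases hv with hv | hv
      · exact (Finset.mem_sdiff.1 hv).2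
      · rw [Finset.mem_singleton] at hv; exact hv ▸ hv0
    have hch : ∀ u ∈ A, ∀ v ∈ W,
        ∃ T : Finset V, u ∈ T ∧ v ∉ T ∧ dirCut g' e' u v = g' (T ∩ e') := by
      intro u hu v hv
      refine dirCut_attained g' e' fun h => hWS v hv ?_
      exact h ▸ (Finset.mem_inter.1 hu).1
    choose! T hT1 hT2 hT3 using hch
    set B : V → V → Finset V := fun u v => T u v ∩ e' with hB
    have hBe : ∀ u v, B u v ⊆ e' := fun u v => Finset.inter_subset_right
    set C : V → Finset V := fun u => W.inf' hWne (B u) with hC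
    have hCe : ∀ u, C u ⊆ e' := by
      intro u
      obtain ⟨w, hw⟩ := hWne
      exact (Finset.inf'_le (B u) hw).trans (hBe u w)
    have hCu : ∀ u ∈ A, u ∈ C u := by
      intro u hu
      have hle : ({u} : Finset V) ≤ C u :=
        Finset.le_inf' hWne (B u) fun v hv =>
          Finset.singleton_subset_iff.2
            (Finset.mem_inter.2 ⟨hT1 u hu v hv, (Finset.mem_inter.1 hu).2⟩)
      exact Finset.singleton_subset_iff.1 hle
    have hCsub : ∀ u ∈ A, C u ⊆ A := by
      intro u hu x hx
      have hxe : x ∈ e' := hCe u hx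
      rw [hA, Finset.mem_inter]
      refine ⟨?_, hxe⟩
      by_contra hxS
      have hxW : x ∈ W := by
        rw [hW, Finset.mem_union]
        exact Or.inl (Finset.mem_sdiff.2 ⟨hxe, hxS⟩)
      have : x ∈ B u x := Finset.inf'_le (B u) hxW hx
      exact hT2 u hu x hxW (Finset.mem_inter.1 this).1
    have hAeq : A.sup' hAne C = A := by
      apply le_antisymm
      · exact Finset.sup'_le hAne C hCsub
      · intro x hx
        exact Finset.le_sup' C hx (hCu x hx)
    calc g' (S ∩ e') = g' (A.sup' hAne C) := by rw [hAeq, hA]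
      _ ≤ ∑ u ∈ A, g' (C u) :=
          sup'_subadd g' e' hnn hsub A hAne C fun u _ => hCe u
      _ ≤ ∑ u ∈ A, ∑ v ∈ W, g' (B u v) := by
          refine Finset.sum_le_sum fun u hu => ?_
          exact inf'_subadd g' e' hnn hsub W hWne (B u) fun v _ => hBe u v
      _ = ∑ u ∈ A, ∑ v ∈ W, dirCut g' e' u v := by
          refine Finset.sum_congr rfl fun u hu => Finset.sum_congr rfl fun v hv => ?_
          exact (hT3 u hu v hv).symm
      _ ≤ ∑ u ∈ A, ∑ v ∈ Sᶜ, dirCut g' e' u v := by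
          refine Finset.sum_le_sum fun u _ => ?_
          refine Finset.sum_le_sum_of_subset_of_nonneg ?_ fun v _ _ =>
            dirCut_nonneg g' e' hnn u v
          intro v hv
          exact Finset.mem_compl.2 (hWS v hv)
      _ ≤ ∑ u ∈ S, ∑ v ∈ Sᶜ, dirCut g' e' u v := by
          refine Finset.sum_le_sum_of_subset_of_nonneg ?_ fun u _ _ =>
            Finset.sum_nonneg fun v _ => dirCut_nonneg g' e' hnn u v
          exact Finset.inter_subset_left

end key

theorem stmt5 {V ι : Type*} [Fintype V] [DecidableEq V]
    (E : Finset ι) (edge : ι → Finset V) (g : ι → Finset V → ℝ)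
    (hg0 : ∀ f ∈ E, g f ∅ = 0)
    (hnn : ∀ f ∈ E, ∀ S ⊆ edge f, 0 ≤ g f S)
    (hsub : ∀ f ∈ E, ∀ A ⊆ edge f, ∀ B ⊆ edge f,
      g f (A ∪ B) + g f (A ∩ B) ≤ g f A + g f B)
    (e : ι) (he : e ∈ E) :
    ∀ S : Finset V, S ≠ ∅ → S ≠ Finset.univ → 0 < cutH E edge g S →
      g e (S ∩ edge e) / cutH E edge g S ≤ rho E edge g e := by
  intro S _ hS2 hc
  set c := cutH E edge g S with hcdef
  set D : V → V → ℝ := fun u v => ∑ f ∈ E, dirCut (g f) (edge f) u v with hD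
  have hdnn : ∀ f ∈ E, ∀ u v : V, 0 ≤ dirCut (g f) (edge f) u v := fun f hf u v =>
    dirCut_nonneg (g f) (edge f) (fun B hB => hnn f hf B hB) u v
  have hDnn : ∀ u v : V, 0 ≤ D u v := fun u v =>
    Finset.sum_nonneg fun f hf => hdnn f hf u v
  have key1 : g e (S ∩ edge e) ≤ ∑ u ∈ S, ∑ v ∈ Sᶜ, dirCut (g e) (edge e) u v :=
    key_ineq (g e) (edge e) (hg0 e he) (fun B hB => hnn e he B hB)
      (fun A hA B hB => hsub e he A hA B hB) S hS2
  have hstep : ∀ u ∈ S, ∀ v ∈ Sᶜ,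
      dirCut (g e) (edge e) u v / c ≤ dirCut (g e) (edge e) u v / D u v := by
    intro u hu v hv
    have hnne : 0 ≤ dirCut (g e) (edge e) u v := hdnn e he u v
    have hle : dirCut (g e) (edge e) u v ≤ D u v :=
      Finset.single_le_sum (f := fun f => dirCut (g f) (edge f) u v)
        (fun f hf => hdnn f hf u v) he
    have hDc : D u v ≤ c := by
      rw [hD, hcdef]
      refine Finset.sum_le_sum fun f hf => ?_
      exact dirCut_le_witness (g f) (edge f) (fun B hB => hnn f hf B hB)
        hu (Finset.mem_compl.1 hv)
    rcases eq_or_lt_of_le (hDnn u v) with h0' | h0'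
    · have hz : dirCut (g e) (edge e) u v = 0 := le_antisymm (h0' ▸ hle) hnne
      simp [hz]
    · exact div_le_div_of_nonneg_left hnne h0' hDc
  calc g e (S ∩ edge e) / c
      ≤ (∑ u ∈ S, ∑ v ∈ Sᶜ, dirCut (g e) (edge e) u v) / c := by
        exact (div_le_div_iff_of_pos_right hc).2 key1
    _ = ∑ u ∈ S, ∑ v ∈ Sᶜ, dirCut (g e) (edge e) u v / c := by
        rw [Finset.sum_div]
        exact Finset.sum_congr rfl fun u _ => Finset.sum_div _ _ _
    _ ≤ ∑ u ∈ S, ∑ v ∈ Sᶜ, dirCut (g e) (edge e) u v / D u v :=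
        Finset.sum_le_sum fun u hu => Finset.sum_le_sum fun v hv => hstep u hu v hv
    _ ≤ ∑ u ∈ S, ∑ v : V, dirCut (g e) (edge e) u v / D u v := by
        refine Finset.sum_le_sum fun u _ => ?_
        refine Finset.sum_le_sum_of_subset_of_nonneg (Finset.subset_univ _)
          fun v _ _ => div_nonneg (hdnn e he u v) (hDnn u v)
    _ ≤ ∑ u : V, ∑ v : V, dirCut (g e) (edge e) u v / D u v := by
        refine Finset.sum_le_sum_of_subset_of_nonneg (Finset.subset_univ _)
          fun u _ _ => Finset.sum_nonneg fun v _ =>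
            div_nonneg (hdnn e he u v) (hDnn u v)
    _ = rho E edge g e := rfl
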